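/- arXiv:math/0607041 — 4 statements merged into one kernel-verified Lean document; each statement's English description precedes it below -/
import Mathlib

section
/- Let U be an open subset of ℝ^N, and let m ≥ 0 and k ≥ 1 be integers. Let T ⊆ U be a set whose Hausdorff dimension is at most m. Let Z = {Z(t) : t ∈ U} be a jointly measurable stochastic process with values in ℝ^{m+k} whose sample paths are almost surely of class C¹ on U. Let u ∈ ℝ^{m+k} and suppose there exist a neighborhood V of u and a constant M such that for every t ∈ T the random vector Z(t) has a density p_{Z(t)} on ℝ^{m+k} satisfying p_{Z(t)}(v) ≤ M for all v ∈ V. Then almost surely there is no point t ∈ T such that Z(t) = u. -/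
open MeasureTheory
open scoped ENNReal
open scoped NNReal

private lemma bulinskaya_aux_zero {a K : ℝ≥0∞} (hK : K ≠ ∞)
    (h : ∀ ε : ℝ≥0∞, 0 < ε → a ≤ K * ε) : a = 0 := by
  rcases eq_or_ne K 0 with hK0 | hK0
  · have := h 1 one_pos
    simpa [hK0] using this
  · refine le_antisymm ?_ zero_le'
    refine ENNReal.le_of_forall_pos_le_add fun ε hε _ => ?_
    have hεK : (0 : ℝ≥0∞) < ε / K := ENNReal.div_pos (by exact_mod_cast hε.ne') hK
    have := h (ε / K) hεK
    calc a ≤ K * (ε / K) := this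
      _ = ε := ENNReal.mul_div_cancel hK0 hK
      _ ≤ 0 + ε := by simp

/-- Bulinskaya's lemma: if `T ⊆ U` has Hausdorff dimension at most `m` and the
`ℝ^{m+k}`-valued process `Z` has a.s. `C¹` paths on the open set `U` and uniformly
bounded one-dimensional densities near `u`, then a.s. no point of `T` is sent to `u`. -/
theorem bulinskaya
    {N m k : ℕ} (hk : 1 ≤ k)
    {Ω : Type*} [MeasurableSpace Ω] (P : Measure Ω) [IsProbabilityMeasure P]
    (U : Set (EuclideanSpace ℝ (Fin N))) (hU : IsOpen U)
    (T : Set (EuclideanSpace ℝ (Fin N))) (hTU : T ⊆ U)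
    (hdim : dimH T ≤ (m : ℝ≥0∞))
    (Z : EuclideanSpace ℝ (Fin N) → Ω → EuclideanSpace ℝ (Fin (m + k)))
    (hmeas : Measurable (Function.uncurry Z))
    (hC1 : ∀ᵐ ω ∂P, ContDiffOn ℝ 1 (fun t => Z t ω) U)
    (u : EuclideanSpace ℝ (Fin (m + k)))
    (V : Set (EuclideanSpace ℝ (Fin (m + k)))) (hV : V ∈ nhds u)
    (M : ℝ)
    (p : EuclideanSpace ℝ (Fin N) → EuclideanSpace ℝ (Fin (m + k)) → ℝ)
    (hdens : ∀ t ∈ T, P.map (Z t)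
      = MeasureTheory.volume.withDensity (fun v => ENNReal.ofReal (p t v)))
    (hbound : ∀ t ∈ T, ∀ v ∈ V, p t v ≤ M) :
    ∀ᵐ ω ∂P, ∀ t ∈ T, Z t ω ≠ u := by
  classical
  have hZt : ∀ t, Measurable (Z t) := fun t => hmeas.comp measurable_prodMk_left
  -- a closed ball around `u` inside `V`
  obtain ⟨ρ₀, hρ₀pos, hρ₀V⟩ : ∃ ρ > (0:ℝ), Metric.closedBall u ρ ⊆ V := by
    rcases Metric.mem_nhds_iff.1 hV with ⟨r, hr, hball⟩
    exact ⟨r / 2, by positivity,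
      (Metric.closedBall_subset_ball (by linarith)).trans hball⟩
  set C : ℝ≥0∞ := volume (Metric.ball (0 : EuclideanSpace ℝ (Fin (m + k))) 1) with hC
  have hCfin : C ≠ ∞ := (measure_ball_lt_top).ne
  -- the density bound
  have keybound : ∀ t ∈ T, ∀ ρ : ℝ, 0 ≤ ρ → ρ ≤ ρ₀ →
      P {ω | Z t ω ∈ Metric.closedBall u ρ} ≤
        ENNReal.ofReal M * C * ENNReal.ofReal (ρ ^ (m + k)) := by
    intro t ht ρ hρ0 hρρ₀
    have hsubV : Metric.closedBall u ρ ⊆ V :=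
      (Metric.closedBall_subset_closedBall hρρ₀).trans hρ₀V
    have h1 : P {ω | Z t ω ∈ Metric.closedBall u ρ}
        = (P.map (Z t)) (Metric.closedBall u ρ) := by
      rw [Measure.map_apply (hZt t) Metric.isClosed_closedBall.measurableSet]
      rfl
    rw [h1, hdens t ht, withDensity_apply _ Metric.isClosed_closedBall.measurableSet]
    calc ∫⁻ v in Metric.closedBall u ρ, ENNReal.ofReal (p t v) ∂volume
        ≤ ∫⁻ _ in Metric.closedBall u ρ, ENNReal.ofReal M ∂volume := by
          refine setLIntegral_mono' Metric.isClosed_closedBall.measurableSet fun v hv => ?_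
          exact ENNReal.ofReal_le_ofReal (hbound t ht v (hsubV hv))
      _ = ENNReal.ofReal M * volume (Metric.closedBall u ρ) := by
          rw [setLIntegral_const]
      _ = ENNReal.ofReal M * C * ENNReal.ofReal (ρ ^ (m + k)) := by
          rw [Measure.addHaar_closedBall _ _ hρ0, finrank_euclideanSpace_fin, hC]; ring
  -- the key per-ball estimate
  have keyball : ∀ (q : EuclideanSpace ℝ (Fin N)) (r : ℝ) (L : ℕ),
      P {ω | LipschitzOnWith (L : ℝ≥0) (fun t => Z t ω) (Metric.closedBall q r) ∧
             ∃ t ∈ T ∩ Metric.ball q r, Z t ω = u} = 0 := by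
    intro q r L
    set S : Set (EuclideanSpace ℝ (Fin N)) := T ∩ Metric.ball q r with hS
    set E : Set Ω := {ω | LipschitzOnWith (L : ℝ≥0) (fun t => Z t ω) (Metric.closedBall q r) ∧
             ∃ t ∈ S, Z t ω = u} with hE
    -- Hausdorff measure of S in dimension m+1 vanishes
    have hdimS : dimH S < ((m + 1 : ℝ≥0) : ℝ≥0∞) := by
      refine lt_of_le_of_lt ((dimH_mono Set.inter_subset_left).trans hdim) ?_
      have hcast : ((m + 1 : ℝ≥0) : ℝ≥0∞) = (m : ℝ≥0∞) + 1 := by push_cast; ring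
      rw [hcast]
      exact ENNReal.lt_add_right (by simp) one_ne_zero
    have hH : μH[((m + 1 : ℝ≥0) : ℝ)] S = 0 := hausdorffMeasure_of_dimH_lt hdimS
    set r₁ : ℝ := min 1 (ρ₀ / (L + 1)) with hr₁
    have hr₁pos : 0 < r₁ := lt_min one_pos (by positivity)
    have hr₁le1 : r₁ ≤ 1 := min_le_left _ _
    -- constant
    set K : ℝ≥0∞ := ENNReal.ofReal M * C * ENNReal.ofReal ((L : ℝ) ^ (m + k)) with hK
    have hKfin : K ≠ ∞ := by
      refine ENNReal.mul_ne_top (ENNReal.mul_ne_top ?_ hCfin) ?_ <;> exact ENNReal.ofReal_ne_top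
    refine bulinskaya_aux_zero hKfin fun ε hε => ?_
    -- find a good cover of S
    obtain ⟨t, hcov, hdiam, hsum⟩ : ∃ t : ℕ → Set (EuclideanSpace ℝ (Fin N)),
        ∃ (_ : S ⊆ ⋃ n, t n) (_ : ∀ n, EMetric.diam (t n) ≤ ENNReal.ofReal r₁),
        (∑' n, ⨆ _ : (t n).Nonempty, EMetric.diam (t n) ^ ((m + 1 : ℝ≥0) : ℝ)) < ε := by
      have happ := Measure.hausdorffMeasure_apply ((m + 1 : ℝ≥0) : ℝ) S
      rw [hH] at happ
      have hinner : (⨅ (t : ℕ → Set (EuclideanSpace ℝ (Fin N)))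
          (_ : S ⊆ ⋃ n, t n) (_ : ∀ n, EMetric.diam (t n) ≤ ENNReal.ofReal r₁),
            ∑' n, ⨆ _ : (t n).Nonempty, EMetric.diam (t n) ^ ((m + 1 : ℝ≥0) : ℝ)) = 0 := by
        refine le_antisymm ?_ zero_le'
        calc _ ≤ _ := le_iSup₂ (f := fun (r : ℝ≥0∞) (_ : 0 < r) =>
              ⨅ (t : ℕ → Set (EuclideanSpace ℝ (Fin N)))
                (_ : S ⊆ ⋃ n, t n) (_ : ∀ n, EMetric.diam (t n) ≤ r),
                ∑' n, ⨆ _ : (t n).Nonempty, EMetric.diam (t n) ^ ((m + 1 : ℝ≥0) : ℝ))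
              (ENNReal.ofReal r₁) (by simpa using hr₁pos)
          _ = 0 := happ.symm
      have : (⨅ (t : ℕ → Set (EuclideanSpace ℝ (Fin N)))
          (_ : S ⊆ ⋃ n, t n) (_ : ∀ n, EMetric.diam (t n) ≤ ENNReal.ofReal r₁),
            ∑' n, ⨆ _ : (t n).Nonempty, EMetric.diam (t n) ^ ((m + 1 : ℝ≥0) : ℝ)) < ε := by
        rw [hinner]; exact hε
      simpa only [iInf_lt_iff] using this
    -- choose points of S in the cover sets
    set c : ℕ → EuclideanSpace ℝ (Fin N) := fun n =>
      if hn : (S ∩ t n).Nonempty then hn.choose else q with hc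
    have hcmem : ∀ n, (S ∩ t n).Nonempty → c n ∈ S ∩ t n := by
      intro n hn
      simp only [hc, dif_pos hn]
      exact hn.choose_spec
    set G : ℕ → Set Ω := fun n =>
      if (S ∩ t n).Nonempty then
        {ω | edist (Z (c n) ω) u ≤ (L : ℝ≥0∞) * EMetric.diam (t n)} else ∅ with hG
    -- E is covered by the G n
    have hEG : E ⊆ ⋃ n, G n := by
      rintro ω ⟨hLip, t₀, ht₀S, hZt₀⟩
      obtain ⟨n, htn⟩ := Set.mem_iUnion.1 (hcov ht₀S)
      have hn : (S ∩ t n).Nonempty := ⟨t₀, ht₀S, htn⟩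
      obtain ⟨hcS, hctn⟩ := hcmem n hn
      refine Set.mem_iUnion.2 ⟨n, ?_⟩
      rw [hG]; simp only [if_pos hn]
      show edist (Z (c n) ω) u ≤ (L : ℝ≥0∞) * EMetric.diam (t n)
      have h1 : edist (Z (c n) ω) u = edist (Z (c n) ω) (Z t₀ ω) := by rw [hZt₀]
      have h2 : edist (Z (c n) ω) (Z t₀ ω) ≤ (L : ℝ≥0) * edist (c n) t₀ :=
        hLip (Metric.ball_subset_closedBall hcS.2) (Metric.ball_subset_closedBall ht₀S.2)
      have h3 : edist (c n) t₀ ≤ EMetric.diam (t n) :=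
        EMetric.edist_le_diam_of_mem hctn htn
      calc edist (Z (c n) ω) u = edist (Z (c n) ω) (Z t₀ ω) := h1
        _ ≤ (L : ℝ≥0) * edist (c n) t₀ := h2
        _ ≤ (L : ℝ≥0∞) * EMetric.diam (t n) := by
            exact_mod_cast mul_le_mul_right h3 _
    -- bound on each G n
    have hGn : ∀ n, P (G n) ≤ K * ⨆ _ : (t n).Nonempty, EMetric.diam (t n) ^ ((m + 1 : ℝ≥0) : ℝ) := by
      intro n
      by_cases hn : (S ∩ t n).Nonempty
      · have hcS := (hcmem n hn).1
        set dn : ℝ := (EMetric.diam (t n)).toReal with hdn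
        have hdiamfin : EMetric.diam (t n) ≠ ∞ :=
          ((hdiam n).trans_lt ENNReal.ofReal_lt_top).ne
        have hdiameq : EMetric.diam (t n) = ENNReal.ofReal dn := by
          rw [hdn, ENNReal.ofReal_toReal hdiamfin]
        have hdn0 : 0 ≤ dn := ENNReal.toReal_nonneg
        have hdnr₁ : dn ≤ r₁ := by
          have := hdiam n
          rw [hdiameq] at this
          exact (ENNReal.ofReal_le_ofReal_iff hr₁pos.le).1 this
        have hdn1 : dn ≤ 1 := hdnr₁.trans hr₁le1
        set ρ : ℝ := (L : ℝ) * dn with hρ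
        have hρ0 : 0 ≤ ρ := by positivity
        have hρρ₀ : ρ ≤ ρ₀ := by
          have h1 : dn ≤ ρ₀ / (L + 1) := hdnr₁.trans (min_le_right _ _)
          have h2 : (L : ℝ) * dn ≤ (L : ℝ) * (ρ₀ / (L + 1)) :=
            mul_le_mul_of_nonneg_left h1 (Nat.cast_nonneg _)
          have h3 : (L : ℝ) * (ρ₀ / (L + 1)) ≤ ρ₀ := by
            rw [mul_div_assoc']
            rw [div_le_iff₀ (by positivity)]
            nlinarith [Nat.cast_nonneg (α := ℝ) L, hρ₀pos.le]
          exact h2.trans h3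
        have hsubset : G n ⊆ {ω | Z (c n) ω ∈ Metric.closedBall u ρ} := by
          rw [hG]; simp only [if_pos hn]
          intro ω hω
          simp only [Set.mem_setOf_eq] at hω ⊢
          rw [Metric.mem_closedBall, dist_comm, ← edist_le_ofReal hρ0, edist_comm]
          calc edist (Z (c n) ω) u ≤ (L : ℝ≥0∞) * EMetric.diam (t n) := hω
            _ = ENNReal.ofReal ρ := by
                rw [hdiameq, hρ, ENNReal.ofReal_mul (Nat.cast_nonneg _)]
                congr 1
                simp [ENNReal.ofReal_natCast]
        have hb := keybound (c n) hcS.1 ρ hρ0 hρρ₀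
        have hpow : ENNReal.ofReal (ρ ^ (m + k)) ≤
            ENNReal.ofReal ((L : ℝ) ^ (m + k)) * EMetric.diam (t n) ^ ((m + 1 : ℝ≥0) : ℝ) := by
          have h1 : ρ ^ (m + k) = (L : ℝ) ^ (m + k) * dn ^ (m + k) := by
            rw [hρ, mul_pow]
          have h2 : dn ^ (m + k) ≤ dn ^ (m + 1) :=
            pow_le_pow_of_le_one hdn0 hdn1 (by omega)
          have h3 : EMetric.diam (t n) ^ ((m + 1 : ℝ≥0) : ℝ) = ENNReal.ofReal (dn ^ (m + 1)) := by
            rw [hdiameq,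
              show ((m + 1 : ℝ≥0) : ℝ) = ((m + 1 : ℕ) : ℝ) by push_cast; ring,
              ENNReal.rpow_natCast, ← ENNReal.ofReal_pow hdn0]
          rw [h3, ← ENNReal.ofReal_mul (by positivity)]
          refine ENNReal.ofReal_le_ofReal ?_
          calc ρ ^ (m + k) = (L : ℝ) ^ (m + k) * dn ^ (m + k) := h1
            _ ≤ (L : ℝ) ^ (m + k) * dn ^ (m + 1) :=
              mul_le_mul_of_nonneg_left h2 (by positivity)
        have htne : (t n).Nonempty := ⟨c n, (hcmem n hn).2⟩
        calc P (G n) ≤ ENNReal.ofReal M * C * ENNReal.ofReal (ρ ^ (m + k)) :=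
              (measure_mono hsubset).trans hb
          _ ≤ ENNReal.ofReal M * C *
              (ENNReal.ofReal ((L : ℝ) ^ (m + k)) * EMetric.diam (t n) ^ ((m + 1 : ℝ≥0) : ℝ)) :=
              mul_le_mul_right hpow _
          _ = K * EMetric.diam (t n) ^ ((m + 1 : ℝ≥0) : ℝ) := by rw [hK]; ring
          _ = K * ⨆ _ : (t n).Nonempty, EMetric.diam (t n) ^ ((m + 1 : ℝ≥0) : ℝ) := by
              rw [iSup_pos htne]
      · rw [hG]; simp only [if_neg hn]
        simp
    -- put everything together
    calc P E ≤ ∑' n, P (G n) := (measure_mono hEG).trans (measure_iUnion_le _)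
      _ ≤ ∑' n, K * ⨆ _ : (t n).Nonempty, EMetric.diam (t n) ^ ((m + 1 : ℝ≥0) : ℝ) :=
          ENNReal.tsum_le_tsum hGn
      _ = K * ∑' n, ⨆ _ : (t n).Nonempty, EMetric.diam (t n) ^ ((m + 1 : ℝ≥0) : ℝ) :=
          ENNReal.tsum_mul_left
      _ ≤ K * ε := mul_le_mul_right hsum.le _
  -- countable dense set and countable union of events
  obtain ⟨D, hDc, hDd⟩ := TopologicalSpace.exists_countable_dense (EuclideanSpace ℝ (Fin N))
  haveI : Countable D := hDc.to_subtype
  set s : D × ℚ × ℕ → Set Ω := fun i =>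
    {ω | LipschitzOnWith ((i.2.2 : ℕ) : ℝ≥0) (fun t => Z t ω)
          (Metric.closedBall (i.1 : EuclideanSpace ℝ (Fin N)) (i.2.1 : ℝ)) ∧
      ∃ t ∈ T ∩ Metric.ball (i.1 : EuclideanSpace ℝ (Fin N)) ((i.2.1 : ℝ)), Z t ω = u} with hs
  have hsnull : ∀ i, P (s i) = 0 := fun i => keyball _ _ _
  have hUnull : P (⋃ i, s i) = 0 :=
    le_antisymm ((measure_iUnion_le _).trans (by simp [hsnull])) zero_le'
  rw [ae_iff]
  have hC1' : P {ω | ¬ ContDiffOn ℝ 1 (fun t => Z t ω) U} = 0 := by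
    rw [← ae_iff] at *; exact hC1
  refine le_antisymm ?_ zero_le'
  calc P {ω | ¬ ∀ t ∈ T, Z t ω ≠ u}
      ≤ P ({ω | ¬ ContDiffOn ℝ 1 (fun t => Z t ω) U} ∪ ⋃ i, s i) := by
        refine measure_mono fun ω hω => ?_
        simp only [Set.mem_setOf_eq] at hω
        push_neg at hω
        obtain ⟨t₀, ht₀T, ht₀⟩ := hω
        by_cases hsm : ContDiffOn ℝ 1 (fun t => Z t ω) U
        · right
          -- find a Lipschitz neighborhood
          have hca : ContDiffAt ℝ 1 (fun t => Z t ω) t₀ :=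
            hsm.contDiffAt (hU.mem_nhds (hTU ht₀T))
          obtain ⟨K₀, s', hs'nhds, hLip⟩ := hca.exists_lipschitzOnWith
          obtain ⟨δ, hδpos, hδsub⟩ :=
            Metric.mem_nhds_iff.1 (Filter.inter_mem hs'nhds (hU.mem_nhds (hTU ht₀T)))
          obtain ⟨q, hqD, hqt⟩ :=
            Metric.mem_closure_iff.1 (hDd t₀) (δ / 4) (by positivity)
          obtain ⟨r', hr'1, hr'2⟩ := exists_rat_btwn (show δ / 4 < δ / 2 by linarith)
          have hballs : Metric.closedBall q (r' : ℝ) ⊆ Metric.ball t₀ δ := by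
            intro y hy
            have h1 : dist y q ≤ (r' : ℝ) := hy
            have h2 : dist t₀ q < δ / 4 := hqt
            calc dist y t₀ ≤ dist y q + dist q t₀ := dist_triangle _ _ _
              _ < (r' : ℝ) + δ / 4 := by
                  rw [dist_comm q t₀]; linarith
              _ < δ := by linarith
          refine Set.mem_iUnion.2 ⟨⟨⟨q, hqD⟩, r', ⌈K₀⌉₊⟩, ?_, ⟨t₀, ⟨ht₀T, ?_⟩, ht₀⟩⟩
          · have hweak : LipschitzOnWith ((⌈K₀⌉₊ : ℕ) : ℝ≥0) (fun t => Z t ω) s' :=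
              fun x hx y hy => (hLip hx hy).trans
                (mul_le_mul_left (by exact_mod_cast Nat.le_ceil K₀) _)
            exact hweak.mono (hballs.trans (hδsub.trans Set.inter_subset_left))
          · show t₀ ∈ Metric.ball q (r' : ℝ)
            rw [Metric.mem_ball, dist_comm]
            calc dist q t₀ = dist t₀ q := dist_comm q t₀
              _ < δ / 4 := hqt
              _ < (r' : ℝ) := hr'1
        · left; exact hsm
    _ ≤ P {ω | ¬ ContDiffOn ℝ 1 (fun t => Z t ω) U} + P (⋃ i, s i) := measure_union_le _ _
    _ = 0 := by rw [hC1', hUnull, add_zero]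
end

section
/- Let a, b be real numbers with a² + b² = 1/2 and let n ∈ ℕ. Then for every x ∈ ℝ, ∫_{−∞}^{+∞} e^{−y²/2} H_n(ay + bx) dy = (2b)^n √(2π) · H̄_n(x). -/
/-- The Hermite polynomials `H_n(x) = (-1)^n e^{x²} (d/dx)^n e^{-x²}`. -/
noncomputable def hermiteH (n : ℕ) (x : ℝ) : ℝ :=
  (-1 : ℝ) ^ n * Real.exp (x ^ 2) * iteratedDeriv n (fun y => Real.exp (-y ^ 2)) x

/-- The modified Hermite polynomials `H̄_n(x) = (-1)^n e^{x²/2} (d/dx)^n e^{-x²/2}`. -/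
noncomputable def hermiteHbar (n : ℕ) (x : ℝ) : ℝ :=
  (-1 : ℝ) ^ n * Real.exp (x ^ 2 / 2) * iteratedDeriv n (fun y => Real.exp (-y ^ 2 / 2)) x

open Polynomial MeasureTheory Real

noncomputable def Q (n : ℕ) : Polynomial ℝ := (Polynomial.hermite n).map (Int.castRingHom ℝ)

lemma Q_zero : Q 0 = 1 := by simp [Q]

lemma Q_succ (n : ℕ) : Q (n + 1) = X * Q n - derivative (Q n) := by
  simp [Q, Polynomial.hermite_succ, Polynomial.derivative_map]

lemma derivative_hermite (n : ℕ) :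
    derivative (Polynomial.hermite (n + 1)) = C ((n : ℤ) + 1) * Polynomial.hermite n := by
  induction n with
  | zero => simp [Polynomial.hermite_one]
  | succ n ih =>
      have h := Polynomial.hermite_succ n
      rw [Polynomial.hermite_succ (n + 1), derivative_sub, derivative_mul, derivative_X, ih,
        derivative_mul, derivative_C]
      push_cast
      simp only [map_add, map_one]
      linear_combination (-(C (n : ℤ) + 1)) * h

lemma derivative_Q (n : ℕ) : derivative (Q (n + 1)) = C ((n : ℝ) + 1) * Q n := by
  rw [Q, Polynomial.derivative_map, derivative_hermite, Polynomial.map_mul, Polynomial.map_C]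
  norm_num [Q]

lemma aeval_eq_Q (n : ℕ) (x : ℝ) : (Polynomial.aeval x) (Polynomial.hermite n) = (Q n).eval x := by
  rw [Q, Polynomial.eval_map, Polynomial.aeval_def]
  norm_num [Polynomial.eval₂_eq_eval_map]

lemma integrable_pow_gauss (k : ℕ) :
    Integrable fun y : ℝ => y ^ k * Real.exp (-(1/2 : ℝ) * y ^ 2) := by
  have := integrable_rpow_mul_exp_neg_mul_sq (b := 1/2) (by norm_num) (s := k)
    (lt_of_lt_of_le (by norm_num) (Nat.cast_nonneg k))
  simpa [Real.rpow_natCast] using this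

lemma integrable_gauss_poly (p : Polynomial ℝ) :
    Integrable fun y : ℝ => Real.exp (-y ^ 2 / 2) * p.eval y := by
  have h : (fun y : ℝ => Real.exp (-y ^ 2 / 2) * p.eval y)
      = fun y : ℝ => p.eval y * Real.exp (-(1/2 : ℝ) * y ^ 2) := by
    funext y; rw [mul_comm]; ring_nf
  rw [h]; clear h
  induction p using Polynomial.induction_on' with
  | add p q hp hq => simpa [add_mul, Pi.add_def] using hp.add hq
  | monomial n a =>
      have h2 : (fun y : ℝ => (Polynomial.monomial n a).eval y * Real.exp (-(1/2 : ℝ) * y ^ 2))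
          = fun y : ℝ => a * (y ^ n * Real.exp (-(1/2 : ℝ) * y ^ 2)) := by
        funext y; simp [Polynomial.eval_monomial]; ring
      rw [h2]
      exact (integrable_pow_gauss n).const_mul a

lemma eval_comp_lin (p : Polynomial ℝ) (α c y : ℝ) :
    (p.comp (C α * X + C c)).eval y = p.eval (α * y + c) := by
  simp [Polynomial.eval_comp]

lemma int1 (p : Polynomial ℝ) (α c : ℝ) :
    Integrable fun y : ℝ => Real.exp (-y ^ 2 / 2) * p.eval (α * y + c) := by
  have h := integrable_gauss_poly (p.comp (C α * X + C c))
  simp only [Polynomial.eval_comp, Polynomial.eval_add, Polynomial.eval_mul, Polynomial.eval_C,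
    Polynomial.eval_X] at h
  exact h

lemma int2 (p : Polynomial ℝ) (α c : ℝ) :
    Integrable fun y : ℝ => Real.exp (-y ^ 2 / 2) * (y * p.eval (α * y + c)) := by
  have h := integrable_gauss_poly (X * p.comp (C α * X + C c))
  simp only [Polynomial.eval_comp, Polynomial.eval_add, Polynomial.eval_mul, Polynomial.eval_C,
    Polynomial.eval_X] at h
  exact h

lemma ibp (p : Polynomial ℝ) (α c : ℝ) :
    (∫ y : ℝ, Real.exp (-y ^ 2 / 2) * (y * p.eval (α * y + c)))
      = α * ∫ y : ℝ, Real.exp (-y ^ 2 / 2) * (derivative p).eval (α * y + c) := by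
  have hu : ∀ y : ℝ, HasDerivAt (fun y : ℝ => p.eval (α * y + c))
      ((derivative p).eval (α * y + c) * α) y := by
    intro y
    have hl : HasDerivAt (fun y : ℝ => α * y + c) α y := by
      simpa using ((hasDerivAt_id y).const_mul α).add_const c
    exact (Polynomial.hasDerivAt p (α * y + c)).comp y hl
  have hv : ∀ y : ℝ, HasDerivAt (fun y : ℝ => -Real.exp (-y ^ 2 / 2))
      (y * Real.exp (-y ^ 2 / 2)) y := by
    intro y
    have h1 : HasDerivAt (fun y : ℝ => -y ^ 2 / 2) (-y) y := by
      have h : HasDerivAt (fun y : ℝ => -y ^ 2 / 2) (-((2:ℕ) * y ^ (2 - 1)) / 2) y :=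
        (hasDerivAt_pow 2 y).neg.div_const 2
      convert h using 1
      push_cast
      ring
    have h2 : HasDerivAt (fun y : ℝ => -Real.exp (-y ^ 2 / 2)) (-(Real.exp (-y ^ 2 / 2) * -y)) y :=
      h1.exp.neg
    convert h2 using 1
    ring
  have hI1 : Integrable ((fun y : ℝ => p.eval (α * y + c))
      * fun y : ℝ => y * Real.exp (-y ^ 2 / 2)) :=
    (int2 p α c).congr (Filter.Eventually.of_forall fun y => by simp [Pi.mul_apply]; ring)
  have hI2 : Integrable ((fun y : ℝ => (derivative p).eval (α * y + c) * α)
      * fun y : ℝ => -Real.exp (-y ^ 2 / 2)) :=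
    ((int1 (derivative p) α c).const_mul (-α)).congr
      (Filter.Eventually.of_forall fun y => by simp [Pi.mul_apply]; ring)
  have hI3 : Integrable ((fun y : ℝ => p.eval (α * y + c))
      * fun y : ℝ => -Real.exp (-y ^ 2 / 2)) :=
    (int1 p α c).neg.congr (Filter.Eventually.of_forall fun y => by simp [Pi.mul_apply]; ring)
  have H := MeasureTheory.integral_mul_deriv_eq_deriv_mul_of_integrable (fun y _ => hu y) (fun y _ => hv y) hI1 hI2 hI3
  beta_reduce at H
  have e1 : (∫ y : ℝ, Real.exp (-y ^ 2 / 2) * (y * p.eval (α * y + c)))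
      = ∫ y : ℝ, p.eval (α * y + c) * (y * Real.exp (-y ^ 2 / 2)) := by
    congr 1; funext y; ring
  have e2 : (∫ y : ℝ, (derivative p).eval (α * y + c) * α * -Real.exp (-y ^ 2 / 2))
      = (-α) * ∫ y : ℝ, Real.exp (-y ^ 2 / 2) * (derivative p).eval (α * y + c) := by
    rw [← MeasureTheory.integral_const_mul]
    congr 1; funext y; ring
  rw [e1, H, e2]
  ring

lemma step (α γ x : ℝ) (h : α ^ 2 + γ ^ 2 = 1) (p : Polynomial ℝ) :
    (∫ y : ℝ, Real.exp (-y ^ 2 / 2) * (X * p - derivative p).eval (α * y + γ * x))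
      = γ * x * (∫ y : ℝ, Real.exp (-y ^ 2 / 2) * p.eval (α * y + γ * x))
        - γ ^ 2 * ∫ y : ℝ, Real.exp (-y ^ 2 / 2) * (derivative p).eval (α * y + γ * x) := by
  have e : (fun y : ℝ => Real.exp (-y ^ 2 / 2) * (X * p - derivative p).eval (α * y + γ * x))
      = fun y : ℝ => α * (Real.exp (-y ^ 2 / 2) * (y * p.eval (α * y + γ * x)))
        + (γ * x * (Real.exp (-y ^ 2 / 2) * p.eval (α * y + γ * x))
          - Real.exp (-y ^ 2 / 2) * (derivative p).eval (α * y + γ * x)) := by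
    funext y
    simp only [Polynomial.eval_sub, Polynomial.eval_mul, Polynomial.eval_X]
    ring
  have h1 : Integrable fun y : ℝ =>
      α * (Real.exp (-y ^ 2 / 2) * (y * p.eval (α * y + γ * x))) :=
    (int2 p α (γ * x)).const_mul α
  have h2 : Integrable fun y : ℝ =>
      γ * x * (Real.exp (-y ^ 2 / 2) * p.eval (α * y + γ * x)) :=
    (int1 p α (γ * x)).const_mul (γ * x)
  have h3 : Integrable fun y : ℝ =>
      Real.exp (-y ^ 2 / 2) * (derivative p).eval (α * y + γ * x) :=
    int1 (derivative p) α (γ * x)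
  have h23 : Integrable fun y : ℝ =>
      γ * x * (Real.exp (-y ^ 2 / 2) * p.eval (α * y + γ * x))
        - Real.exp (-y ^ 2 / 2) * (derivative p).eval (α * y + γ * x) := h2.sub h3
  rw [e, MeasureTheory.integral_add h1 h23, MeasureTheory.integral_const_mul,
    MeasureTheory.integral_sub h2 h3, MeasureTheory.integral_const_mul, ibp]
  linear_combination (∫ y : ℝ, Real.exp (-y ^ 2 / 2) * (derivative p).eval (α * y + γ * x)) * h

lemma key0 : (∫ y : ℝ, Real.exp (-y ^ 2 / 2)) = Real.sqrt (2 * π) := by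
  have h : (fun y : ℝ => Real.exp (-y ^ 2 / 2)) = fun y : ℝ => Real.exp (-(1/2 : ℝ) * y ^ 2) := by
    funext y; ring_nf
  rw [h, integral_gaussian]
  congr 1
  ring

lemma key (α γ : ℝ) (h : α ^ 2 + γ ^ 2 = 1) (n : ℕ) (x : ℝ) :
    (∫ y : ℝ, Real.exp (-y ^ 2 / 2) * (Q n).eval (α * y + γ * x))
      = Real.sqrt (2 * π) * γ ^ n * (Q n).eval x := by
  induction n using Nat.twoStepInduction with
  | zero =>
      simp only [Q_zero, Polynomial.eval_one, mul_one, pow_zero, key0]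
  | one =>
      rw [show Q 1 = X * Q 0 - derivative (Q 0) from Q_succ 0, step α γ x h (Q 0)]
      simp [Q_zero, key0]
      ring
  | more n ihn ihn1 =>
      have hD : (∫ y : ℝ, Real.exp (-y ^ 2 / 2) * (derivative (Q (n + 1))).eval (α * y + γ * x))
          = ((n : ℝ) + 1) * (Real.sqrt (2 * π) * γ ^ n * (Q n).eval x) := by
        rw [derivative_Q]
        simp only [Polynomial.eval_mul, Polynomial.eval_C]
        rw [show (fun y : ℝ => Real.exp (-y ^ 2 / 2) * (((n : ℝ) + 1) * (Q n).eval (α * y + γ * x)))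
            = fun y : ℝ => ((n : ℝ) + 1) * (Real.exp (-y ^ 2 / 2) * (Q n).eval (α * y + γ * x))
          from funext fun y => by ring, MeasureTheory.integral_const_mul, ihn]
      rw [show Q (n + 2) = X * Q (n + 1) - derivative (Q (n + 1)) from Q_succ (n + 1),
        step α γ x h (Q (n + 1)), hD, ihn1]
      simp only [Polynomial.eval_sub, Polynomial.eval_mul, Polynomial.eval_X, derivative_Q,
        Polynomial.eval_C]
      ring


lemma hbar_eq (n : ℕ) (x : ℝ) : hermiteHbar n x = (Q n).eval x := by
  rw [hermiteHbar, show (fun y : ℝ => Real.exp (-y ^ 2 / 2))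
      = fun y : ℝ => Real.exp (-(y ^ 2 / 2)) from funext fun y => by rw [neg_div],
    iteratedDeriv_eq_iterate, Polynomial.deriv_gaussian_eq_hermite_mul_gaussian, aeval_eq_Q]
  have h1 : Real.exp (x ^ 2 / 2) * Real.exp (-(x ^ 2 / 2)) = 1 := by
    rw [← Real.exp_add]; simp
  calc (-1 : ℝ) ^ n * Real.exp (x ^ 2 / 2)
        * ((-1) ^ n * (Q n).eval x * Real.exp (-(x ^ 2 / 2)))
      = ((-1 : ℝ) * (-1)) ^ n * (Real.exp (x ^ 2 / 2) * Real.exp (-(x ^ 2 / 2)))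
          * (Q n).eval x := by rw [mul_pow]; ring
    _ = (Q n).eval x := by rw [h1]; norm_num

lemma hH_eq (n : ℕ) (x : ℝ) :
    hermiteH n x = Real.sqrt 2 ^ n * (Q n).eval (Real.sqrt 2 * x) := by
  rw [hermiteH]
  have hc : (fun y : ℝ => Real.exp (-y ^ 2))
      = fun y : ℝ => (fun t : ℝ => Real.exp (-(t ^ 2 / 2))) (Real.sqrt 2 * y) := by
    funext y
    simp only
    congr 1
    rw [mul_pow, Real.sq_sqrt (by norm_num : (0:ℝ) ≤ 2)]
    ring
  have hcd : ContDiff ℝ n fun t : ℝ => Real.exp (-(t ^ 2 / 2)) :=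
    (Real.contDiff_exp.of_le le_top).comp (((contDiff_id.pow 2).div_const 2).neg)
  rw [hc, iteratedDeriv_comp_const_mul hcd (Real.sqrt 2), iteratedDeriv_eq_iterate]
  beta_reduce
  rw [Polynomial.deriv_gaussian_eq_hermite_mul_gaussian, aeval_eq_Q]
  have h2 : Real.exp (-((Real.sqrt 2 * x) ^ 2 / 2)) = Real.exp (-(x ^ 2)) := by
    congr 1
    rw [mul_pow, Real.sq_sqrt (by norm_num : (0:ℝ) ≤ 2)]
    ring
  have h1 : Real.exp (x ^ 2) * Real.exp (-(x ^ 2)) = 1 := by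
    rw [← Real.exp_add]; simp
  rw [h2]
  calc (-1 : ℝ) ^ n * Real.exp (x ^ 2)
        * (Real.sqrt 2 ^ n * ((-1) ^ n * (Q n).eval (Real.sqrt 2 * x) * Real.exp (-(x ^ 2))))
      = ((-1 : ℝ) * (-1)) ^ n * (Real.exp (x ^ 2) * Real.exp (-(x ^ 2)))
          * (Real.sqrt 2 ^ n * (Q n).eval (Real.sqrt 2 * x)) := by rw [mul_pow]; ring
    _ = Real.sqrt 2 ^ n * (Q n).eval (Real.sqrt 2 * x) := by rw [h1]; norm_num

/-- If `a² + b² = 1/2` then `∫ e^{-y²/2} H_n(ay + bx) dy = (2b)^n √(2π) H̄_n(x)`. -/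
theorem integral_gaussian_hermite (a b : ℝ) (hab : a ^ 2 + b ^ 2 = 1 / 2)
    (n : ℕ) (x : ℝ) :
    (∫ y : ℝ, Real.exp (-y ^ 2 / 2) * hermiteH n (a * y + b * x))
      = (2 * b) ^ n * Real.sqrt (2 * Real.pi) * hermiteHbar n x := by
  have hαγ : (Real.sqrt 2 * a) ^ 2 + (Real.sqrt 2 * b) ^ 2 = 1 := by
    rw [mul_pow, mul_pow, Real.sq_sqrt (by norm_num : (0:ℝ) ≤ 2)]
    linear_combination 2 * hab
  have e : (fun y : ℝ => Real.exp (-y ^ 2 / 2) * hermiteH n (a * y + b * x))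
      = fun y : ℝ => Real.sqrt 2 ^ n
          * (Real.exp (-y ^ 2 / 2)
            * (Q n).eval ((Real.sqrt 2 * a) * y + (Real.sqrt 2 * b) * x)) := by
    funext y
    rw [hH_eq, show Real.sqrt 2 * (a * y + b * x)
        = (Real.sqrt 2 * a) * y + (Real.sqrt 2 * b) * x from by ring]
    ring
  rw [e, MeasureTheory.integral_const_mul, key (Real.sqrt 2 * a) (Real.sqrt 2 * b) hαγ n x,
    hbar_eq]
  have h2 : Real.sqrt 2 ^ n * (Real.sqrt 2 * b) ^ n = (2 * b) ^ n := by
    rw [← mul_pow, ← mul_assoc, Real.mul_self_sqrt (by norm_num : (0:ℝ) ≤ 2)]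
  linear_combination (Real.sqrt (2 * Real.pi) * (Q n).eval x) * h2
end

section
/- Let S ⊂ ℝ^d be compact and let r be a symmetric positive semidefinite kernel of class C² on a neighborhood of S × S with r(t,t) = 1 for every t, and r(s,t) < 1 for all s, t ∈ S with s ≠ t. Suppose that for every t ∈ S the d × d matrix Λ_t := (∂²r/∂s_i∂t_k(t,t))_{i,k} is positive definite. Then there exists a constant L > 0 such that 1 − r(s,t) ≥ L‖s − t‖² for all s, t ∈ S. -/
section Aux

variable {E : Type*} [NormedAddCommGroup E] [NormedSpace ℝ E]

private lemma aux_hasFDerivAt {F : E × E → ℝ} {U : Set (E × E)} (hU : IsOpen U)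
    (hC2 : ContDiffOn ℝ 2 F U) {p : E × E} (hp : p ∈ U) :
    HasFDerivAt F (fderiv ℝ F p) p :=
  ((hC2.differentiableOn (by norm_num)).differentiableAt (hU.mem_nhds hp)).hasFDerivAt

private lemma aux_hasFDerivAt' {F : E × E → ℝ} {U : Set (E × E)} (hU : IsOpen U)
    (hC2 : ContDiffOn ℝ 2 F U) {p : E × E} (hp : p ∈ U) :
    HasFDerivAt (fderiv ℝ F) (fderiv ℝ (fderiv ℝ F) p) p := by
  have h1 : ContDiffOn ℝ 1 (fderiv ℝ F) U := hC2.fderiv_of_isOpen hU (by norm_num)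
  exact ((h1.differentiableOn one_ne_zero).differentiableAt (hU.mem_nhds hp)).hasFDerivAt

/-- The cross second partial derivative as a second fderiv of the uncurried map. -/
private lemma aux_cross {F : E × E → ℝ} {U : Set (E × E)} (hU : IsOpen U)
    (hC2 : ContDiffOn ℝ 2 F U) {t : E} (ht : (t, t) ∈ U) (v w : E) :
    fderiv ℝ (fun t' => fderiv ℝ (fun s => F (s, t')) t v) t w
      = fderiv ℝ (fderiv ℝ F) (t, t) (0, w) (v, 0) := by
  have key : (fun t' => fderiv ℝ (fun s => F (s, t')) t v) =ᶠ[nhds t]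
      (fun t' => fderiv ℝ F (t, t') (v, 0)) := by
    have hV : IsOpen {t' : E | (t, t') ∈ U} := hU.preimage (Continuous.prodMk_right t)
    filter_upwards [hV.mem_nhds ht] with t' ht'
    have hmk : HasFDerivAt (fun s : E => (s, t'))
        ((ContinuousLinearMap.id ℝ E).prod 0) t :=
      HasFDerivAt.prodMk (hasFDerivAt_id t) (hasFDerivAt_const t' t)
    have hcomp : HasFDerivAt (fun s : E => F (s, t'))
        ((fderiv ℝ F (t, t')).comp ((ContinuousLinearMap.id ℝ E).prod 0)) t :=
      (aux_hasFDerivAt hU hC2 ht').comp t hmk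
    rw [hcomp.fderiv]
    simp
  rw [key.fderiv_eq]
  have hmk2 : HasFDerivAt (fun t' : E => ((t : E), t'))
      ((0 : E →L[ℝ] E).prod (ContinuousLinearMap.id ℝ E)) t :=
    HasFDerivAt.prodMk (hasFDerivAt_const t t) (hasFDerivAt_id t)
  have hcomp : HasFDerivAt (fun t' : E => fderiv ℝ F (t, t'))
      ((fderiv ℝ (fderiv ℝ F) (t, t)).comp
        ((0 : E →L[ℝ] E).prod (ContinuousLinearMap.id ℝ E))) t :=
    (aux_hasFDerivAt' hU hC2 ht).comp t hmk2
  have happ := hcomp.clm_apply (hasFDerivAt_const ((v, 0) : E × E) t)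
  rw [happ.fderiv]
  simp

/-- On the diagonal, the second fderiv vanishes on diagonal directions, given that the
first fderiv vanishes at all diagonal points. -/
private lemma aux_diag {F : E × E → ℝ} {U : Set (E × E)} (hU : IsOpen U)
    (hC2 : ContDiffOn ℝ 2 F U) {t : E} (ht : (t, t) ∈ U)
    (hzero : ∀ x : E, (x, x) ∈ U → fderiv ℝ F (x, x) = 0) (h : E) :
    fderiv ℝ (fderiv ℝ F) (t, t) (h, h) = 0 := by
  have hγ : HasFDerivAt (fun x : E => ((x, x) : E × E))
      ((ContinuousLinearMap.id ℝ E).prod (ContinuousLinearMap.id ℝ E)) t :=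
    HasFDerivAt.prodMk (hasFDerivAt_id t) (hasFDerivAt_id t)
  have hcomp : HasFDerivAt ((fderiv ℝ F) ∘ (fun x : E => ((x, x) : E × E)))
      ((fderiv ℝ (fderiv ℝ F) (t, t)).comp
        ((ContinuousLinearMap.id ℝ E).prod (ContinuousLinearMap.id ℝ E))) t :=
    HasFDerivAt.comp (f := fun x : E => ((x, x) : E × E)) t
      (aux_hasFDerivAt' hU hC2 ht) hγ
  have hcomp' : HasFDerivAt (fun x : E => fderiv ℝ F (x, x))
      ((fderiv ℝ (fderiv ℝ F) (t, t)).comp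
        ((ContinuousLinearMap.id ℝ E).prod (ContinuousLinearMap.id ℝ E))) t := by exact hcomp
  have h0 : HasFDerivAt (fun x : E => fderiv ℝ F (x, x)) (0 : E →L[ℝ] (E × E →L[ℝ] ℝ)) t := by
    have hV : IsOpen {x : E | ((x, x) : E × E) ∈ U} :=
      hU.preimage (continuous_id.prodMk continuous_id)
    have heq : (fun x : E => fderiv ℝ F (x, x)) =ᶠ[nhds t]
        (fun _ => (0 : E × E →L[ℝ] ℝ)) := by
      filter_upwards [hV.mem_nhds ht] with x hx using hzero x hx
    exact (hasFDerivAt_const _ t).congr_of_eventuallyEq heq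
  have huniq := hcomp'.unique h0
  have := ContinuousLinearMap.ext_iff.1 huniq h
  simpa using this

end Aux

set_option maxHeartbeats 1000000 in
/-- On a compact set `S`, a symmetric positive semidefinite `C²` kernel with unit
variance, strictly less than `1` off the diagonal of `S`, and positive definite
second-derivative matrices `Λ_t = (∂²r/∂s_i∂t_k(t,t))_{i,k}` satisfies
`1 - r(s,t) ≥ L‖s - t‖²` on `S × S` for some `L > 0`. -/
theorem one_sub_kernel_ge_quadratic
    {d : ℕ} (S : Set (EuclideanSpace ℝ (Fin d))) (hS : IsCompact S)
    (r : EuclideanSpace ℝ (Fin d) → EuclideanSpace ℝ (Fin d) → ℝ)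
    (U : Set (EuclideanSpace ℝ (Fin d) × EuclideanSpace ℝ (Fin d)))
    (hU : IsOpen U) (hSU : S ×ˢ S ⊆ U)
    (hC2 : ContDiffOn ℝ 2 (Function.uncurry r) U)
    (hsym : ∀ s t, r s t = r t s)
    (hpsd : ∀ (n : ℕ) (pts : Fin n → EuclideanSpace ℝ (Fin d)) (c : Fin n → ℝ),
      0 ≤ ∑ i, ∑ j, c i * c j * r (pts i) (pts j))
    (hone : ∀ t, r t t = 1)
    (hlt : ∀ s ∈ S, ∀ t ∈ S, s ≠ t → r s t < 1)
    (hpos : ∀ t ∈ S,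
      (Matrix.of fun i k : Fin d =>
        fderiv ℝ (fun t' : EuclideanSpace ℝ (Fin d) =>
          fderiv ℝ (fun s : EuclideanSpace ℝ (Fin d) => r s t') t
            (EuclideanSpace.single i 1)) t (EuclideanSpace.single k 1)).PosDef) :
    ∃ L > 0, ∀ s ∈ S, ∀ t ∈ S, 1 - r s t ≥ L * ‖s - t‖ ^ 2 := by
  classical
  rcases S.eq_empty_or_nonempty with rfl | hSne
  · exact ⟨1, one_pos, by simp⟩
  rcases isEmpty_or_nonempty (Fin d) with hd | hd
  · refine ⟨1, one_pos, fun s hs t ht => ?_⟩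
    have hst : s = t := by ext i; exact (hd.false i).elim
    subst hst
    simp [hone]
  set F : (EuclideanSpace ℝ (Fin d)) × (EuclideanSpace ℝ (Fin d)) → ℝ := Function.uncurry r with hFdef
  have hFap : ∀ p : (EuclideanSpace ℝ (Fin d)) × (EuclideanSpace ℝ (Fin d)), F p = r p.1 p.2 := fun p => rfl
  -- Step A : r ≤ 1 everywhere
  have hrle : ∀ s t : EuclideanSpace ℝ (Fin d), r s t ≤ 1 := by
    intro s t
    have h := hpsd 2 ![s, t] ![1, -1]
    simp [Fin.sum_univ_two, hone, hsym t s] at h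
    linarith
  -- Step B : the gradient vanishes at diagonal points of U
  have hDF0 : ∀ x : EuclideanSpace ℝ (Fin d), (x, x) ∈ U → fderiv ℝ F (x, x) = 0 := by
    intro x hx
    have hmax : IsLocalMax F (x, x) := by
      apply Filter.Eventually.of_forall
      intro p
      rw [hFap, hFap]
      simpa [hone] using hrle p.1 p.2
    exact hmax.fderiv_eq_zero
  -- differentiability facts
  have hFd : ∀ p ∈ U, HasFDerivAt F (fderiv ℝ F p) p := fun p hp =>
    ((hC2.differentiableOn (by norm_num)).differentiableAt (hU.mem_nhds hp)).hasFDerivAt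
  have hF'd : ∀ p ∈ U, HasFDerivAt (fderiv ℝ F) (fderiv ℝ (fderiv ℝ F) p) p := by
    intro p hp
    have h1 : ContDiffOn ℝ 1 (fderiv ℝ F) U := hC2.fderiv_of_isOpen hU (by norm_num)
    exact ((h1.differentiableOn one_ne_zero).differentiableAt (hU.mem_nhds hp)).hasFDerivAt
  have hcont2 : ContinuousOn (fderiv ℝ (fderiv ℝ F)) U :=
    (hC2.fderiv_of_isOpen hU (by norm_num : (1 : WithTop ℕ∞) + 1 ≤ 2)).continuousOn_fderiv_of_isOpen hU
      le_rfl
  -- Step C : negativity of the second derivative in first-variable directions at diagonal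
  have hBneg : ∀ t ∈ S, ∀ h : EuclideanSpace ℝ (Fin d), h ≠ 0 →
      fderiv ℝ (fderiv ℝ F) (t, t) (h, 0) (h, 0) < 0 := by
    intro t ht h hh
    have htU : ((t, t) : (EuclideanSpace ℝ (Fin d)) × (EuclideanSpace ℝ (Fin d))) ∈ U :=
      hSU (Set.mk_mem_prod ht ht)
    have hdiag := aux_diag hU hC2 htU hDF0
    have hsplit : fderiv ℝ (fderiv ℝ F) (t, t) ((h, 0) : (EuclideanSpace ℝ (Fin d)) × (EuclideanSpace ℝ (Fin d)))
        = - fderiv ℝ (fderiv ℝ F) (t, t) (0, h) := by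
      have hadd := map_add (fderiv ℝ (fderiv ℝ F) (t, t))
        ((h, 0) : (EuclideanSpace ℝ (Fin d)) × (EuclideanSpace ℝ (Fin d))) ((0, h))
      rw [show ((h, 0) : (EuclideanSpace ℝ (Fin d)) × (EuclideanSpace ℝ (Fin d))) + (0, h) = (h, h) by simp,
        hdiag h] at hadd
      exact eq_neg_of_add_eq_zero_left hadd.symm
    have hentry : ∀ i k : Fin d,
        fderiv ℝ (fun t' : EuclideanSpace ℝ (Fin d) =>
          fderiv ℝ (fun s : EuclideanSpace ℝ (Fin d) => r s t') t
            (EuclideanSpace.single i 1)) t (EuclideanSpace.single k 1)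
        = fderiv ℝ (fderiv ℝ F) (t, t) (0, EuclideanSpace.single k 1)
            (EuclideanSpace.single i 1, 0) := fun i k => aux_cross hU hC2 htU _ _
    have hxne : (fun i : Fin d => h i) ≠ 0 := by
      intro hzero
      apply hh
      ext i
      exact congrFun hzero i
    have hM := (hpos t ht).dotProduct_mulVec_pos hxne
    have hrep : h = ∑ i, h i • EuclideanSpace.single i (1 : ℝ) := by
      have hb := (EuclideanSpace.basisFun (Fin d) ℝ).sum_repr h
      simp only [EuclideanSpace.basisFun_apply, EuclideanSpace.basisFun_repr] at hb
      exact hb.symm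
    have e2 : fderiv ℝ (fderiv ℝ F) (t, t) ((0 : EuclideanSpace ℝ (Fin d)), h)
        = ∑ k, h k • fderiv ℝ (fderiv ℝ F) (t, t) (0, EuclideanSpace.single k 1) := by
      have e1 : (((0 : EuclideanSpace ℝ (Fin d)), h) : (EuclideanSpace ℝ (Fin d)) × (EuclideanSpace ℝ (Fin d)))
          = ∑ k, h k • ((0, EuclideanSpace.single k 1) : (EuclideanSpace ℝ (Fin d)) × (EuclideanSpace ℝ (Fin d))) := by
        rw [Prod.ext_iff]
        constructor
        · simp [Prod.fst_sum]
        · simp only [Prod.snd_sum, Prod.smul_mk, smul_zero, Prod.mk.injEq]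
          exact hrep
      rw [e1, map_sum]
      simp only [map_smul]
    have e3 : ∀ L : (EuclideanSpace ℝ (Fin d)) × (EuclideanSpace ℝ (Fin d)) →L[ℝ] ℝ,
        L (h, 0) = ∑ i, h i * L (EuclideanSpace.single i 1, 0) := by
      intro L
      have e1 : ((h, (0 : EuclideanSpace ℝ (Fin d))) : (EuclideanSpace ℝ (Fin d)) × (EuclideanSpace ℝ (Fin d)))
          = ∑ i, h i • ((EuclideanSpace.single i 1, 0) : (EuclideanSpace ℝ (Fin d)) × (EuclideanSpace ℝ (Fin d))) := by
        rw [Prod.ext_iff]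
        constructor
        · simp only [Prod.fst_sum, Prod.smul_mk, smul_zero, Prod.mk.injEq]
          exact hrep
        · simp [Prod.snd_sum]
      rw [e1, map_sum]
      simp only [map_smul, smul_eq_mul]
    have hexp : fderiv ℝ (fderiv ℝ F) (t, t) ((0 : EuclideanSpace ℝ (Fin d)), h) (h, 0)
        = ∑ k, h k * ∑ i, h i * fderiv ℝ (fderiv ℝ F) (t, t) (0, EuclideanSpace.single k 1)
            (EuclideanSpace.single i 1, 0) := by
      rw [e2, ContinuousLinearMap.sum_apply]
      refine Finset.sum_congr rfl fun k _ => ?_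
      rw [ContinuousLinearMap.smul_apply, smul_eq_mul,
        e3 (fderiv ℝ (fderiv ℝ F) (t, t) (0, EuclideanSpace.single k 1))]
    have hMexp : (0:ℝ) < ∑ i, h i * ∑ k,
        fderiv ℝ (fderiv ℝ F) (t, t) (0, EuclideanSpace.single k 1)
          (EuclideanSpace.single i 1, 0) * h k := by
      have hdot : dotProduct (star fun i : Fin d => h i)
          ((Matrix.of fun i k : Fin d =>
            fderiv ℝ (fun t' : EuclideanSpace ℝ (Fin d) =>
              fderiv ℝ (fun s : EuclideanSpace ℝ (Fin d) => r s t') t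
                (EuclideanSpace.single i 1)) t (EuclideanSpace.single k 1)).mulVec
            fun i => h i)
          = ∑ i, h i * ∑ k,
              fderiv ℝ (fderiv ℝ F) (t, t) (0, EuclideanSpace.single k 1)
                (EuclideanSpace.single i 1, 0) * h k := by
        simp only [dotProduct, Matrix.mulVec, Matrix.of_apply, star_trivial, hentry]
      rw [← hdot]
      exact hM
    have hpos' : (0:ℝ) < fderiv ℝ (fderiv ℝ F) (t, t) ((0 : EuclideanSpace ℝ (Fin d)), h) (h, 0) := by
      rw [hexp]
      have hcomm : ∑ k, h k * ∑ i, h i * fderiv ℝ (fderiv ℝ F) (t, t)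
            (0, EuclideanSpace.single k 1) (EuclideanSpace.single i 1, 0)
          = ∑ i, h i * ∑ k,
              fderiv ℝ (fderiv ℝ F) (t, t) (0, EuclideanSpace.single k 1)
                (EuclideanSpace.single i 1, 0) * h k := by
        simp only [Finset.mul_sum]
        rw [Finset.sum_comm]
        exact Finset.sum_congr rfl fun i _ => Finset.sum_congr rfl fun k _ => by ring
      rw [hcomm]
      exact hMexp
    rw [hsplit, ContinuousLinearMap.neg_apply]
    linarith
  -- Step D/E : compactness, the max m < 0 of the second derivative form, thickening δ
  obtain ⟨m, hm, δ, hδ, hthick⟩ :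
      ∃ m < (0:ℝ), ∃ δ > (0:ℝ), ∀ (p : (EuclideanSpace ℝ (Fin d)) × (EuclideanSpace ℝ (Fin d))) (h : EuclideanSpace ℝ (Fin d)), ‖h‖ = 1 →
        (∃ t ∈ S, dist p (t, t) < δ) →
        p ∈ U ∧ fderiv ℝ (fderiv ℝ F) p (h, 0) (h, 0) < m / 2 := by
    set Φ : (((EuclideanSpace ℝ (Fin d)) × (EuclideanSpace ℝ (Fin d))) × (EuclideanSpace ℝ (Fin d))) → ℝ :=
      fun q => fderiv ℝ (fderiv ℝ F) q.1 (q.2, 0) (q.2, 0) with hΦdef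
    have hW : IsOpen (U ×ˢ (Set.univ : Set (EuclideanSpace ℝ (Fin d)))) := hU.prod isOpen_univ
    have hΦ : ContinuousOn Φ (U ×ˢ Set.univ) := by
      have c1 : ContinuousOn (fun q : ((EuclideanSpace ℝ (Fin d)) × (EuclideanSpace ℝ (Fin d))) × (EuclideanSpace ℝ (Fin d)) =>
          fderiv ℝ (fderiv ℝ F) q.1) (U ×ˢ Set.univ) :=
        hcont2.comp continuousOn_fst (fun q hq => hq.1)
      have c2 : ContinuousOn (fun q : ((EuclideanSpace ℝ (Fin d)) × (EuclideanSpace ℝ (Fin d))) × (EuclideanSpace ℝ (Fin d)) =>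
          ((q.2, (0 : EuclideanSpace ℝ (Fin d))) : (EuclideanSpace ℝ (Fin d)) × (EuclideanSpace ℝ (Fin d))))
          (U ×ˢ Set.univ) :=
        (continuous_snd.prodMk continuous_const).continuousOn
      exact (c1.clm_apply c2).clm_apply c2
    set K₀ : Set (((EuclideanSpace ℝ (Fin d)) × (EuclideanSpace ℝ (Fin d))) × (EuclideanSpace ℝ (Fin d))) :=
      ((fun x : EuclideanSpace ℝ (Fin d) => ((x, x) : (EuclideanSpace ℝ (Fin d)) × (EuclideanSpace ℝ (Fin d)))) '' S)
        ×ˢ Metric.sphere (0 : EuclideanSpace ℝ (Fin d)) 1 with hK₀def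
    have hK₀c : IsCompact K₀ :=
      (hS.image (continuous_id.prodMk continuous_id)).prod (isCompact_sphere 0 1)
    have hK₀sub : K₀ ⊆ U ×ˢ Set.univ := by
      rintro ⟨p, h⟩ ⟨⟨x, hx, rfl⟩, -⟩
      exact ⟨hSU (Set.mk_mem_prod hx hx), trivial⟩
    have hK₀ne : K₀.Nonempty := by
      obtain ⟨t0, ht0⟩ := hSne
      refine ⟨((t0, t0), EuclideanSpace.single hd.some 1), ⟨⟨t0, ht0, rfl⟩, ?_⟩⟩
      simp [EuclideanSpace.norm_single]
    obtain ⟨q0, hq0K, hq0max'⟩ := hK₀c.exists_isMaxOn hK₀ne (hΦ.mono hK₀sub)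
    have hq0max : ∀ q ∈ K₀, Φ q ≤ Φ q0 := fun q hq => hq0max' hq
    have hmneg : Φ q0 < 0 := by
      obtain ⟨⟨x, hx, hxe⟩, hsph⟩ := hq0K
      have hq2 : q0.2 ≠ 0 := by
        intro h0
        rw [Metric.mem_sphere, dist_zero_right, h0] at hsph
        simp at hsph
      have := hBneg x hx q0.2 hq2
      rw [hΦdef]
      simp only
      rw [← hxe]
      exact this
    have hKO : K₀ ⊆ (U ×ˢ Set.univ) ∩ Φ ⁻¹' (Set.Iio (Φ q0 / 2)) := by
      intro q hq
      refine ⟨hK₀sub hq, ?_⟩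
      have h1 := hq0max q hq
      have : Φ q < Φ q0 / 2 := by linarith
      exact this
    have hO : IsOpen ((U ×ˢ Set.univ) ∩ Φ ⁻¹' (Set.Iio (Φ q0 / 2))) :=
      hΦ.isOpen_inter_preimage hW isOpen_Iio
    obtain ⟨δ, hδpos, hsub⟩ := hK₀c.exists_thickening_subset_open hO hKO
    refine ⟨Φ q0, hmneg, δ, hδpos, ?_⟩
    rintro p h hh ⟨t, htS, hdist⟩
    have hmem : ((p, h)) ∈ Metric.thickening δ K₀ := by
      rw [Metric.mem_thickening_iff]
      refine ⟨((t, t), h), ⟨⟨t, htS, rfl⟩, by simp [hh]⟩, ?_⟩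
      rw [Prod.dist_eq]
      simp only [dist_self]
      exact max_lt hdist hδpos
    have hres := hsub hmem
    exact ⟨hres.1.1, hres.2⟩
  -- Step F : near-diagonal quadratic bound
  have hnear : ∀ s ∈ S, ∀ t ∈ S, s ≠ t → ‖s - t‖ < δ →
      1 - r s t ≥ (-(m / 4)) * ‖s - t‖ ^ 2 := by
    intro s hs t ht hst hnorm
    have hv : s - t ≠ 0 := sub_ne_zero.2 hst
    have hvpos : (0:ℝ) < ‖s - t‖ := norm_pos_iff.2 hv
    set v : EuclideanSpace ℝ (Fin d) := s - t with hvdef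
    set h : EuclideanSpace ℝ (Fin d) := ‖v‖⁻¹ • v with hhdef
    have hhn : ‖h‖ = 1 := norm_smul_inv_norm hv
    set γ : ℝ → (EuclideanSpace ℝ (Fin d)) × (EuclideanSpace ℝ (Fin d)) :=
      fun τ => (t + τ • v, t) with hγdef
    have htU : ((t, t) : (EuclideanSpace ℝ (Fin d)) × (EuclideanSpace ℝ (Fin d))) ∈ U :=
      hSU (Set.mk_mem_prod ht ht)
    have hseg : ∀ τ ∈ Set.Icc (0:ℝ) 1, γ τ ∈ U ∧
        fderiv ℝ (fderiv ℝ F) (γ τ) (h, 0) (h, 0) < m / 2 := by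
      intro τ hτ
      refine hthick (γ τ) h hhn ⟨t, ht, ?_⟩
      rw [hγdef]
      simp only
      rw [Prod.dist_eq]
      simp only [dist_self]
      refine max_lt ?_ hδ
      rw [dist_eq_norm, add_sub_cancel_left, norm_smul, Real.norm_eq_abs,
        abs_of_nonneg hτ.1]
      calc τ * ‖v‖ ≤ 1 * ‖v‖ := mul_le_mul_of_nonneg_right hτ.2 (norm_nonneg v)
        _ = ‖v‖ := one_mul _
        _ < δ := hnorm
    have hγd : ∀ τ : ℝ, HasDerivAt γ ((v, 0)) τ := by
      intro τ
      apply HasDerivAt.prodMk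
      · simpa using ((hasDerivAt_id τ).smul_const v).const_add t
      · exact hasDerivAt_const τ t
    set φ : ℝ → ℝ := fun τ => F (γ τ) with hφdef
    set φ₁ : ℝ → ℝ := fun τ => fderiv ℝ F (γ τ) (v, 0) with hφ₁def
    have hφd : ∀ τ ∈ Set.Icc (0:ℝ) 1, HasDerivAt φ (φ₁ τ) τ := fun τ hτ =>
      (hFd (γ τ) (hseg τ hτ).1).comp_hasDerivAt τ (hγd τ)
    have hφ₁d : ∀ τ ∈ Set.Icc (0:ℝ) 1,
        HasDerivAt φ₁ (fderiv ℝ (fderiv ℝ F) (γ τ) (v, 0) (v, 0)) τ := by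
      intro τ hτ
      have h1 := (hF'd (γ τ) (hseg τ hτ).1).comp_hasDerivAt τ (hγd τ)
      have h2 := h1.clm_apply (hasDerivAt_const τ ((v, 0) :
        (EuclideanSpace ℝ (Fin d)) × (EuclideanSpace ℝ (Fin d))))
      simpa using h2
    have hbound : ∀ τ ∈ Set.Icc (0:ℝ) 1,
        fderiv ℝ (fderiv ℝ F) (γ τ) (v, 0) (v, 0) ≤ m / 2 * ‖v‖ ^ 2 := by
      intro τ hτ
      have hΦlt := (hseg τ hτ).2
      have hveq : ((v, 0) : (EuclideanSpace ℝ (Fin d)) × (EuclideanSpace ℝ (Fin d)))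
          = ‖v‖ • ((h, 0) : (EuclideanSpace ℝ (Fin d)) × (EuclideanSpace ℝ (Fin d))) := by
        rw [hhdef, Prod.smul_mk, smul_smul, smul_zero]
        rw [mul_inv_cancel₀ (norm_ne_zero_iff.2 hv), one_smul]
      rw [hveq]
      simp only [ContinuousLinearMap.map_smul, ContinuousLinearMap.smul_apply, smul_eq_mul]
      have h2 : ‖v‖ * fderiv ℝ (fderiv ℝ F) (γ τ) (h, 0) (h, 0) ≤ ‖v‖ * (m / 2) :=
        mul_le_mul_of_nonneg_left hΦlt.le (norm_nonneg v)
      have h3 : ‖v‖ * (‖v‖ * fderiv ℝ (fderiv ℝ F) (γ τ) (h, 0) (h, 0))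
          ≤ ‖v‖ * (‖v‖ * (m / 2)) := by
        refine mul_le_mul_of_nonneg_left ?_ (norm_nonneg v)
        exact h2
      calc ‖v‖ * (‖v‖ * fderiv ℝ (fderiv ℝ F) (γ τ) (h, 0) (h, 0))
          ≤ ‖v‖ * (‖v‖ * (m / 2)) := h3
        _ = m / 2 * ‖v‖ ^ 2 := by ring
    set ψ₁ : ℝ → ℝ := fun τ => -φ₁ τ + m / 2 * ‖v‖ ^ 2 * τ with hψ₁def
    have hψ₁d : ∀ τ ∈ Set.Icc (0:ℝ) 1, HasDerivAt ψ₁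
        (-(fderiv ℝ (fderiv ℝ F) (γ τ) (v, 0) (v, 0)) + m / 2 * ‖v‖ ^ 2) τ := by
      intro τ hτ
      exact ((hφ₁d τ hτ).neg).add (by simpa using (hasDerivAt_id τ).const_mul (m / 2 * ‖v‖ ^ 2))
    have hψ₁mono : MonotoneOn ψ₁ (Set.Icc (0:ℝ) 1) := by
      apply monotoneOn_of_deriv_nonneg (convex_Icc 0 1)
      · intro τ hτ
        exact (hψ₁d τ hτ).continuousAt.continuousWithinAt
      · intro τ hτ
        rw [interior_Icc] at hτ
        exact (hψ₁d τ (Set.Ioo_subset_Icc_self hτ)).differentiableAt.differentiableWithinAt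
      · intro τ hτ
        rw [interior_Icc] at hτ
        rw [(hψ₁d τ (Set.Ioo_subset_Icc_self hτ)).deriv]
        have := hbound τ (Set.Ioo_subset_Icc_self hτ)
        linarith
    have hγ0 : γ 0 = ((t, t) : (EuclideanSpace ℝ (Fin d)) × (EuclideanSpace ℝ (Fin d))) := by
      rw [hγdef]; simp
    have hψ₁0 : ψ₁ 0 = 0 := by
      rw [hψ₁def]
      simp only [hφ₁def, hγ0, hDF0 t htU]
      simp
    have hψ₁nn : ∀ τ ∈ Set.Icc (0:ℝ) 1, 0 ≤ ψ₁ τ := by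
      intro τ hτ
      have := hψ₁mono (Set.left_mem_Icc.2 zero_le_one) hτ hτ.1
      rwa [hψ₁0] at this
    set ψ : ℝ → ℝ := fun τ => 1 - φ τ + m / 4 * ‖v‖ ^ 2 * τ ^ 2 with hψdef
    have hψd : ∀ τ ∈ Set.Icc (0:ℝ) 1, HasDerivAt ψ (ψ₁ τ) τ := by
      intro τ hτ
      have h1 : HasDerivAt (fun τ => 1 - φ τ) (-φ₁ τ) τ := (hφd τ hτ).const_sub 1
      have h2 : HasDerivAt (fun τ : ℝ => m / 4 * ‖v‖ ^ 2 * τ ^ 2)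
          (m / 4 * ‖v‖ ^ 2 * (2 * τ)) τ := by
        simpa [mul_comm, mul_assoc, mul_left_comm] using
          (hasDerivAt_pow 2 τ).const_mul (m / 4 * ‖v‖ ^ 2)
      have h3 := h1.add h2
      refine h3.congr_deriv ?_
      rw [hψ₁def]
      ring
    have hψmono : MonotoneOn ψ (Set.Icc (0:ℝ) 1) := by
      apply monotoneOn_of_deriv_nonneg (convex_Icc 0 1)
      · intro τ hτ
        exact (hψd τ hτ).continuousAt.continuousWithinAt
      · intro τ hτ
        rw [interior_Icc] at hτ
        exact (hψd τ (Set.Ioo_subset_Icc_self hτ)).differentiableAt.differentiableWithinAt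
      · intro τ hτ
        rw [interior_Icc] at hτ
        rw [(hψd τ (Set.Ioo_subset_Icc_self hτ)).deriv]
        exact hψ₁nn τ (Set.Ioo_subset_Icc_self hτ)
    have hfinal := hψmono (Set.left_mem_Icc.2 zero_le_one) (Set.right_mem_Icc.2 zero_le_one)
      zero_le_one
    have hψ0 : ψ 0 = 0 := by
      rw [hψdef]
      simp only [hφdef, hγ0]
      rw [hFap]
      simp [hone]
    have hγ1 : γ 1 = ((s, t) : (EuclideanSpace ℝ (Fin d)) × (EuclideanSpace ℝ (Fin d))) := by
      rw [hγdef]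
      simp [hvdef]
    have hψ1 : ψ 1 = 1 - r s t + m / 4 * ‖v‖ ^ 2 := by
      rw [hψdef]
      simp only [hφdef, hγ1]
      rw [hFap]
      simp
    rw [hψ0, hψ1] at hfinal
    have : ‖v‖ = ‖s - t‖ := by rw [hvdef]
    rw [ge_iff_le]
    nlinarith [hfinal]
  -- Step G : off-diagonal bound
  obtain ⟨L₂, hL₂pos, hL₂⟩ :
      ∃ L₂ > (0:ℝ), ∀ p ∈ (S ×ˢ S) ∩ {p : (EuclideanSpace ℝ (Fin d)) × (EuclideanSpace ℝ (Fin d)) | δ ≤ dist p.1 p.2},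
        1 - r p.1 p.2 ≥ L₂ * ‖p.1 - p.2‖ ^ 2 := by
    set K₁ := (S ×ˢ S) ∩ {p : (EuclideanSpace ℝ (Fin d)) × (EuclideanSpace ℝ (Fin d)) | δ ≤ dist p.1 p.2} with hK₁def
    have hK₁c : IsCompact K₁ :=
      (hS.prod hS).inter_right (isClosed_le continuous_const (continuous_fst.dist continuous_snd))
    rcases K₁.eq_empty_or_nonempty with hemp | hne
    · refine ⟨1, one_pos, fun p hp => ?_⟩
      rw [hemp] at hp
      exact absurd hp (Set.notMem_empty p)
    · have hcont : ContinuousOn (fun p : (EuclideanSpace ℝ (Fin d)) × (EuclideanSpace ℝ (Fin d)) => 1 - F p) K₁ :=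
        continuousOn_const.sub (hC2.continuousOn.mono (fun p hp => hSU hp.1))
      obtain ⟨p0, hp0, hp0min'⟩ := hK₁c.exists_isMinOn hne hcont
      have hp0min : ∀ p ∈ K₁, 1 - F p0 ≤ 1 - F p := fun p hp => hp0min' hp
      have hp0ne : p0.1 ≠ p0.2 := by
        intro he
        have h1 : δ ≤ dist p0.1 p0.2 := hp0.2
        rw [he, dist_self] at h1
        linarith
      have hm₁ : 0 < 1 - F p0 := by
        have := hlt p0.1 hp0.1.1 p0.2 hp0.1.2 hp0ne
        rw [hFap]
        linarith
      obtain ⟨p1, hp1, hp1max'⟩ := (hS.prod hS).exists_isMaxOn (hSne.prod hSne)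
        (((continuous_fst.sub continuous_snd).norm).continuousOn :
          ContinuousOn (fun p : (EuclideanSpace ℝ (Fin d)) × (EuclideanSpace ℝ (Fin d)) => ‖p.1 - p.2‖) _)
      have hp1max : ∀ p ∈ S ×ˢ S, ‖p.1 - p.2‖ ≤ ‖p1.1 - p1.2‖ := fun p hp => hp1max' hp
      have hRpos : (0:ℝ) < ‖p1.1 - p1.2‖ := by
        have h1 : δ ≤ dist p0.1 p0.2 := hp0.2
        have h2 : dist p0.1 p0.2 = ‖p0.1 - p0.2‖ := dist_eq_norm _ _
        have h3 := hp1max p0 hp0.1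
        linarith
      refine ⟨(1 - F p0) / ‖p1.1 - p1.2‖ ^ 2, by positivity, ?_⟩
      intro p hp
      have h1 := hp0min p hp
      have h2 := hp1max p hp.1
      have h3 : ‖p.1 - p.2‖ ^ 2 ≤ ‖p1.1 - p1.2‖ ^ 2 := by
        nlinarith [norm_nonneg (p.1 - p.2)]
      have h4 : (1 - F p0) / ‖p1.1 - p1.2‖ ^ 2 * ‖p.1 - p.2‖ ^ 2
          ≤ (1 - F p0) / ‖p1.1 - p1.2‖ ^ 2 * ‖p1.1 - p1.2‖ ^ 2 := by
        refine mul_le_mul_of_nonneg_left h3 ?_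
        positivity
      rw [div_mul_cancel₀ _ (by positivity : (‖p1.1 - p1.2‖ ^ 2 : ℝ) ≠ 0)] at h4
      have h5 : F p = r p.1 p.2 := hFap p
      rw [ge_iff_le]
      calc (1 - F p0) / ‖p1.1 - p1.2‖ ^ 2 * ‖p.1 - p.2‖ ^ 2 ≤ 1 - F p0 := h4
        _ ≤ 1 - F p := h1
        _ = 1 - r p.1 p.2 := by rw [h5]
  -- combine
  have hL₁pos : (0:ℝ) < -(m / 4) := by linarith
  refine ⟨min (-(m / 4)) L₂, lt_min hL₁pos hL₂pos, fun s hs t ht => ?_⟩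
  by_cases hst : s = t
  · subst hst
    simp [hone]
  by_cases hdist : dist s t < δ
  · have h1 := hnear s hs t ht hst (by rwa [dist_eq_norm] at hdist)
    have h2 : min (-(m / 4)) L₂ * ‖s - t‖ ^ 2 ≤ (-(m / 4)) * ‖s - t‖ ^ 2 :=
      mul_le_mul_of_nonneg_right (min_le_left _ _) (sq_nonneg _)
    linarith [h1, h2]
  · have hp : ((s, t) : (EuclideanSpace ℝ (Fin d)) × (EuclideanSpace ℝ (Fin d))) ∈ (S ×ˢ S) ∩ {p : (EuclideanSpace ℝ (Fin d)) × (EuclideanSpace ℝ (Fin d)) | δ ≤ dist p.1 p.2} :=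
      ⟨Set.mk_mem_prod hs ht, not_lt.1 hdist⟩
    have h1 := hL₂ (s, t) hp
    have h2 : min (-(m / 4)) L₂ * ‖s - t‖ ^ 2 ≤ L₂ * ‖s - t‖ ^ 2 :=
      mul_le_mul_of_nonneg_right (min_le_right _ _) (sq_nonneg _)
    simp only at h1
    linarith [h1, h2]
end

section
/- Let ρ : ℝ → ℝ be of class C² on a neighborhood of 0 with ρ(0) = 1 and ρ'(0) = −1/2. Then 1 − ρ(w) > 0 for all sufficiently small w > 0, and lim_{w → 0⁺} (1 − ρ(w)² − 4ρ'(w)²·w)/(1 − ρ(w))² = 12ρ''(0) − 1. -/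
open Filter Set

/-- For `ρ` of class `C²` on a neighborhood of `0` with `ρ(0) = 1`, `ρ'(0) = -1/2`,
one has `1 - ρ(w) > 0` for all sufficiently small `w > 0`, and
`(1 - ρ(w)² - 4ρ'(w)²w)/(1 - ρ(w))² → 12ρ''(0) - 1` as `w → 0⁺`. -/
theorem limit_normalized_conditional_variance
    (ρ : ℝ → ℝ) (hρ : ContDiffAt ℝ 2 ρ 0)
    (h0 : ρ 0 = 1) (h1 : deriv ρ 0 = -1 / 2) :
    (∀ᶠ w in nhdsWithin (0 : ℝ) (Set.Ioi 0), 1 - ρ w > 0) ∧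
    Filter.Tendsto
      (fun w => (1 - (ρ w) ^ 2 - 4 * (deriv ρ w) ^ 2 * w) / (1 - ρ w) ^ 2)
      (nhdsWithin (0 : ℝ) (Set.Ioi 0))
      (nhds (12 * deriv (deriv ρ) 0 - 1)) := by
  set A := deriv (deriv ρ) 0 with hA
  obtain ⟨u, hu, hcd⟩ := hρ.contDiffOn le_rfl (by simp)
  obtain ⟨ε, hε, hball⟩ := Metric.mem_nhds_iff.mp hu
  have hcdb : ContDiffOn ℝ 2 ρ (Metric.ball 0 ε) := hcd.mono hball
  have h0ball : (0 : ℝ) ∈ Metric.ball (0 : ℝ) ε := Metric.mem_ball_self hε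
  have hd1 : ContDiffOn ℝ 1 (deriv ρ) (Metric.ball 0 ε) :=
    hcdb.deriv_of_isOpen Metric.isOpen_ball (by norm_num)
  have hdd : DifferentiableAt ℝ (deriv ρ) 0 :=
    (hd1.differentiableOn (by norm_num)).differentiableAt (Metric.isOpen_ball.mem_nhds h0ball)
  have hDD : HasDerivAt (deriv ρ) A 0 := hdd.hasDerivAt
  have hdiffev : ∀ᶠ x in nhds (0 : ℝ), DifferentiableAt ℝ ρ x := by
    filter_upwards [Metric.isOpen_ball.mem_nhds h0ball] with x hx using
      (hcdb.differentiableOn (by norm_num)).differentiableAt (Metric.isOpen_ball.mem_nhds hx)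
  have hD0 : HasDerivAt ρ (-1 / 2 : ℝ) 0 := by
    have := (hρ.differentiableAt (by norm_num)).hasDerivAt
    rwa [h1] at this
  have hsub : Set.Ioi (0 : ℝ) ⊆ {(0 : ℝ)}ᶜ := fun x hx => ne_of_gt hx
  -- L1 : (1 - ρ w)/w → 1/2
  have L1 : Tendsto (fun w => (1 - ρ w) / w) (nhdsWithin 0 (Set.Ioi 0)) (nhds (1 / 2)) := by
    have hs := (hasDerivAt_iff_tendsto_slope.mp hD0).mono_left (nhdsWithin_mono 0 hsub)
    have hneg := hs.neg
    have : -(-1 / 2 : ℝ) = 1 / 2 := by norm_num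
    rw [this] at hneg
    refine hneg.congr' ?_
    filter_upwards [self_mem_nhdsWithin] with w hw
    have hw0 : w ≠ 0 := ne_of_gt hw
    simp only [slope_def_field, h0]
    field_simp
    ring
  -- L3 : (deriv ρ w + 1/2)/w → A
  have L3 : Tendsto (fun w => (deriv ρ w + 1 / 2) / w) (nhdsWithin 0 (Set.Ioi 0)) (nhds A) := by
    have hs := (hasDerivAt_iff_tendsto_slope.mp hDD).mono_left (nhdsWithin_mono 0 hsub)
    refine hs.congr' ?_
    filter_upwards [self_mem_nhdsWithin] with w hw
    have hw0 : w ≠ 0 := ne_of_gt hw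
    simp only [slope_def_field, h1]
    field_simp
    ring
  -- L2 : (ρ w - 1 + w/2)/w^2 → A/2 via L'Hôpital
  have L2 : Tendsto (fun w => (ρ w - 1 + w / 2) / w ^ 2) (nhdsWithin 0 (Set.Ioi 0))
      (nhds (A / 2)) := by
    apply deriv.lhopital_zero_nhdsGT (f := fun w => ρ w - 1 + w / 2) (g := fun w => w ^ 2)
    · filter_upwards [hdiffev.filter_mono nhdsWithin_le_nhds] with x hx
      exact (hx.sub_const 1).add ((differentiable_id.differentiableAt).div_const 2)
    · filter_upwards [self_mem_nhdsWithin] with x hx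
      have : deriv (fun w : ℝ => w ^ 2) x = 2 * x := by
        simp [deriv_pow]
      rw [this]
      exact ne_of_gt (mul_pos two_pos hx)
    · have hc : Tendsto ρ (nhds (0 : ℝ)) (nhds 1) := by
        have := hD0.continuousAt.tendsto
        rwa [h0] at this
      have : Tendsto (fun w => ρ w - 1 + w / 2) (nhds (0 : ℝ)) (nhds 0) := by
        have := (hc.sub_const 1).add ((continuous_id.tendsto (0:ℝ)).div_const 2)
        simpa using this
      exact this.mono_left nhdsWithin_le_nhds
    · have : Tendsto (fun w : ℝ => w ^ 2) (nhds (0 : ℝ)) (nhds 0) := by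
        simpa using (continuous_pow 2).tendsto (0 : ℝ)
      exact this.mono_left nhdsWithin_le_nhds
    · have key : Tendsto (fun x => ((deriv ρ x + 1 / 2) / x) / 2) (nhdsWithin 0 (Set.Ioi 0))
          (nhds (A / 2)) := L3.div_const 2
      refine key.congr' ?_
      filter_upwards [hdiffev.filter_mono nhdsWithin_le_nhds, self_mem_nhdsWithin] with x hx hx0
      have hx0' : (x : ℝ) ≠ 0 := ne_of_gt hx0
      have hdf : deriv (fun w => ρ w - 1 + w / 2) x = deriv ρ x + 1 / 2 := by
        have h : HasDerivAt (fun w => ρ w - 1 + w / 2) (deriv ρ x + 1 / 2) x := by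
          have := (hx.hasDerivAt.sub_const 1).add ((hasDerivAt_id x).div_const 2)
          exact this.congr_deriv (by norm_num)
        exact h.deriv
      have hdg : deriv (fun w : ℝ => w ^ 2) x = 2 * x := by simp [deriv_pow]
      rw [hdf, hdg, div_div, mul_comm]
  -- eventual positivity
  have hpos : ∀ᶠ w in nhdsWithin (0 : ℝ) (Set.Ioi 0), 1 - ρ w > 0 := by
    have hev : ∀ᶠ w in nhdsWithin (0 : ℝ) (Set.Ioi 0), (1 - ρ w) / w > 1 / 4 :=
      L1.eventually (eventually_gt_nhds (by norm_num : (1 : ℝ) / 4 < 1 / 2))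
    filter_upwards [hev, self_mem_nhdsWithin] with w h1w hw
    have : (0 : ℝ) < (1 - ρ w) / w := lt_trans (by norm_num) h1w
    have := mul_pos this hw
    rwa [div_mul_cancel₀ _ (ne_of_gt hw)] at this
  refine ⟨hpos, ?_⟩
  -- continuity of deriv ρ on approach
  have hcder : Tendsto (deriv ρ) (nhdsWithin 0 (Set.Ioi 0)) (nhds (-1 / 2)) := by
    have := hdd.continuousAt.tendsto
    rw [h1] at this
    exact this.mono_left nhdsWithin_le_nhds
  -- the combined limit
  have T : Tendsto
      (fun w => (-2 * ((ρ w - 1 + w / 2) / w ^ 2)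
          + 2 * ((deriv ρ w + 1 / 2) / w) * (1 - 2 * deriv ρ w)
          - ((1 - ρ w) / w) ^ 2) * (((1 - ρ w) / w)⁻¹) ^ 2)
      (nhdsWithin (0 : ℝ) (Set.Ioi 0))
      (nhds ((-2 * (A / 2) + 2 * A * (1 - 2 * (-1 / 2)) - (1 / 2 : ℝ) ^ 2)
        * (((1 / 2 : ℝ))⁻¹) ^ 2)) := by
    exact ((((L2.const_mul (-2)).add
      ((L3.const_mul 2).mul (tendsto_const_nhds.sub (hcder.const_mul 2)))).sub
      (L1.pow 2)).mul ((L1.inv₀ (by norm_num)).pow 2))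
  have hval : (-2 * (A / 2) + 2 * A * (1 - 2 * (-1 / 2)) - (1 / 2 : ℝ) ^ 2)
      * (((1 / 2 : ℝ))⁻¹) ^ 2 = 12 * A - 1 := by norm_num; ring
  rw [hval] at T
  refine T.congr' ?_
  filter_upwards [hpos, self_mem_nhdsWithin] with w hw1 hw0
  have hwne : w ≠ 0 := ne_of_gt hw0
  have hρne : 1 - ρ w ≠ 0 := ne_of_gt hw1
  field_simp
  ring
end
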